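/- arXiv:1906.00199 — 5 statements merged into one kernel-verified Lean document; each statement's English description precedes it below -/
import Mathlib

section
/- Let Φ ∈ ℝ^{p×n}, Ψ ∈ ℝ^{q×n}, Ψ̃ ∈ ℝ^{q×m}, with L = ΨᵀΨ, L̃ = ΨᵀΨ̃, K = ΦᵀΦ, A = (L + nλI)⁻¹L̃ for λ > 0, and ε > 0. Define the empirical likelihood operator Ĉ = Φ(L + nλI)⁻¹Ψᵀ and prior operator C̃ = (1/m)Ψ̃Ψ̃ᵀ. Then (ĈC̃)ᵀ(ĈC̃Ĉᵀ + εI)⁻¹ = Ψ̃[AᵀKA + mεI]⁻¹AᵀΦᵀ. -/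
open Matrix

lemma aux_posdef_smul_one {k : ℕ} {c : ℝ} (hc : 0 < c) :
    ((c • 1 : Matrix (Fin k) (Fin k) ℝ)).PosDef := by
  rw [smul_one_eq_diagonal]
  exact Matrix.PosDef.diagonal fun _ => hc

lemma aux_posSemidef_mul_transpose {a b : ℕ} (M : Matrix (Fin a) (Fin b) ℝ) :
    (M * Mᵀ).PosSemidef := by
  have := Matrix.posSemidef_self_mul_conjTranspose M
  rwa [Matrix.conjTranspose_eq_transpose_of_trivial] at this

lemma aux_posSemidef_transpose_mul {a b : ℕ} (M : Matrix (Fin a) (Fin b) ℝ) :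
    (Mᵀ * M).PosSemidef := by
  have := Matrix.posSemidef_conjTranspose_mul_self M
  rwa [Matrix.conjTranspose_eq_transpose_of_trivial] at this

/-- Nonparametric computational form of the empirical deconditional mean operator:
`(ĈC̃)ᵀ (ĈC̃Ĉᵀ + εI)⁻¹ = Ψ̃ [AᵀKA + mεI]⁻¹ Aᵀ Φᵀ`. -/
theorem empirical_dmo_form {p q n m : ℕ}
    (Φ : Matrix (Fin p) (Fin n) ℝ) (Ψ : Matrix (Fin q) (Fin n) ℝ)
    (Ψt : Matrix (Fin q) (Fin m) ℝ) (l ε : ℝ) (hl : 0 < l) (hε : 0 < ε) :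
    let L : Matrix (Fin n) (Fin n) ℝ := Ψᵀ * Ψ
    let Lt : Matrix (Fin n) (Fin m) ℝ := Ψᵀ * Ψt
    let K : Matrix (Fin n) (Fin n) ℝ := Φᵀ * Φ
    let A : Matrix (Fin n) (Fin m) ℝ := (L + ((n : ℝ) * l) • 1)⁻¹ * Lt
    let Chat : Matrix (Fin p) (Fin q) ℝ := Φ * (L + ((n : ℝ) * l) • 1)⁻¹ * Ψᵀ
    let Ct : Matrix (Fin q) (Fin q) ℝ := (1 / (m : ℝ)) • (Ψt * Ψtᵀ)
    (Chat * Ct)ᵀ * (Chat * Ct * Chatᵀ + ε • (1 : Matrix (Fin p) (Fin p) ℝ))⁻¹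
      = Ψt * (Aᵀ * K * A + ((m : ℝ) * ε) • (1 : Matrix (Fin m) (Fin m) ℝ))⁻¹ * Aᵀ * Φᵀ := by
  intro L Lt K A Chat Ct
  rcases Nat.eq_zero_or_pos m with hm | hm
  · subst hm
    have hCt : Ct = 0 := by
      show (1 / ((0:ℕ) : ℝ)) • (Ψt * Ψtᵀ) = 0
      norm_num
    have hR : Ψt * (Aᵀ * K * A + ((0:ℕ) * ε) • (1 : Matrix (Fin 0) (Fin 0) ℝ))⁻¹ = 0 := by
      ext i j
      simp [Matrix.mul_apply]
    rw [hCt, Matrix.mul_zero, Matrix.transpose_zero, Matrix.zero_mul, hR,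
      Matrix.zero_mul, Matrix.zero_mul]
  · have hm' : ((m:ℝ)) ≠ 0 := Nat.cast_ne_zero.mpr hm.ne'
    set N : Matrix (Fin n) (Fin n) ℝ := L + ((n : ℝ) * l) • 1 with hN
    set M : Matrix (Fin p) (Fin m) ℝ := Φ * A with hM
    set c : ℝ := (m : ℝ) * ε with hc
    have hc0 : 0 < c := mul_pos (by exact_mod_cast hm) hε
    -- symmetry of N and its inverse
    have hNsymm : Nᵀ = N := by
      rw [hN, Matrix.transpose_add, Matrix.transpose_smul, Matrix.transpose_one]
      congr 1
      show (Ψᵀ * Ψ)ᵀ = Ψᵀ * Ψ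
      rw [Matrix.transpose_mul, Matrix.transpose_transpose]
    have hNinv : (N⁻¹)ᵀ = N⁻¹ := by
      rw [Matrix.transpose_nonsing_inv, hNsymm]
    -- transpose of A
    have hAt : Aᵀ = Ψtᵀ * Ψ * N⁻¹ := by
      show ((N⁻¹) * (Ψᵀ * Ψt))ᵀ = Ψtᵀ * Ψ * N⁻¹
      rw [Matrix.transpose_mul, Matrix.transpose_mul, Matrix.transpose_transpose, hNinv,
        Matrix.mul_assoc]
    have hMt : Mᵀ = Aᵀ * Φᵀ := by rw [hM]; exact Matrix.transpose_mul Φ A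
    -- B = Chat * Ct
    have hB : Chat * Ct = (1 / (m:ℝ)) • (M * Ψtᵀ) := by
      show (Φ * N⁻¹ * Ψᵀ) * ((1 / (m : ℝ)) • (Ψt * Ψtᵀ)) = (1 / (m:ℝ)) • (M * Ψtᵀ)
      rw [Matrix.mul_smul, hM]
      congr 1
      show Φ * N⁻¹ * Ψᵀ * (Ψt * Ψtᵀ) = Φ * (N⁻¹ * (Ψᵀ * Ψt)) * Ψtᵀ
      simp only [Matrix.mul_assoc]
    have hChatT : Chatᵀ = Ψ * N⁻¹ * Φᵀ := by
      show (Φ * N⁻¹ * Ψᵀ)ᵀ = Ψ * N⁻¹ * Φᵀ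
      rw [Matrix.transpose_mul, Matrix.transpose_mul, Matrix.transpose_transpose, hNinv,
        Matrix.mul_assoc]
    have hBt : (Chat * Ct)ᵀ = (1 / (m:ℝ)) • (Ψt * Mᵀ) := by
      rw [hB, Matrix.transpose_smul, Matrix.transpose_mul, Matrix.transpose_transpose]
    -- the middle product
    have hBB : Chat * Ct * Chatᵀ = (1 / (m:ℝ)) • (M * Mᵀ) := by
      rw [hB, hChatT, Matrix.smul_mul]
      congr 1
      have : Ψtᵀ * (Ψ * N⁻¹) = Aᵀ := by rw [hAt, Matrix.mul_assoc]
      calc M * Ψtᵀ * (Ψ * N⁻¹ * Φᵀ) = M * (Ψtᵀ * (Ψ * N⁻¹)) * Φᵀ := by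
            simp only [Matrix.mul_assoc]
        _ = M * (Aᵀ * Φᵀ) := by rw [this, Matrix.mul_assoc]
        _ = M * Mᵀ := by rw [← hMt]
    -- G
    set G : Matrix (Fin m) (Fin m) ℝ := Mᵀ * M + c • 1 with hG
    have hGeq : Aᵀ * K * A + c • 1 = G := by
      rw [hG]
      congr 1
      show Aᵀ * (Φᵀ * Φ) * A = Mᵀ * M
      rw [hMt, hM]
      simp only [Matrix.mul_assoc]
    have hGpd : G.PosDef :=
      Matrix.PosDef.posSemidef_add (aux_posSemidef_transpose_mul M) (aux_posdef_smul_one hc0)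
    have hGdet : IsUnit G.det := hGpd.det_pos.ne'.isUnit
    -- H
    set H₀ : Matrix (Fin p) (Fin p) ℝ := M * Mᵀ + c • 1 with hH0
    have hH0pd : H₀.PosDef :=
      Matrix.PosDef.posSemidef_add (aux_posSemidef_mul_transpose M) (aux_posdef_smul_one hc0)
    have hHeq : Chat * Ct * Chatᵀ + ε • (1 : Matrix (Fin p) (Fin p) ℝ)
        = (1 / (m:ℝ)) • H₀ := by
      rw [hBB, hH0, smul_add, smul_smul, hc]
      congr 2
      field_simp
    have hHdet : IsUnit (Chat * Ct * Chatᵀ + ε • (1 : Matrix (Fin p) (Fin p) ℝ)).det := by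
      rw [hHeq, Matrix.det_smul]
      exact ((isUnit_iff_ne_zero.mpr (one_div_ne_zero hm')).pow _).mul
        hH0pd.det_pos.ne'.isUnit
    -- push-through core: Mᵀ * H₀ = G * Mᵀ
    have hpush : Mᵀ * H₀ = G * Mᵀ := by
      rw [hH0, hG, Matrix.mul_add, Matrix.add_mul, Matrix.mul_smul, Matrix.smul_mul,
        Matrix.mul_one, Matrix.one_mul]
      congr 1
      exact (Matrix.mul_assoc _ _ _).symm
    set R : Matrix (Fin q) (Fin p) ℝ := Ψt * G⁻¹ * Aᵀ * Φᵀ with hR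
    have hRM : R = Ψt * G⁻¹ * Mᵀ := by
      rw [hR, hMt, Matrix.mul_assoc]
    have hRH : R * (Chat * Ct * Chatᵀ + ε • (1 : Matrix (Fin p) (Fin p) ℝ)) = (Chat * Ct)ᵀ := by
      rw [hHeq, hRM, hBt, Matrix.mul_smul]
      congr 1
      calc Ψt * G⁻¹ * Mᵀ * H₀ = Ψt * (G⁻¹ * (Mᵀ * H₀)) := by simp only [Matrix.mul_assoc]
        _ = Ψt * (G⁻¹ * G * Mᵀ) := by rw [hpush, Matrix.mul_assoc]
        _ = Ψt * Mᵀ := by rw [Matrix.nonsing_inv_mul G hGdet, Matrix.one_mul]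
    calc (Chat * Ct)ᵀ * (Chat * Ct * Chatᵀ + ε • (1 : Matrix (Fin p) (Fin p) ℝ))⁻¹
        = R * ((Chat * Ct * Chatᵀ + ε • (1 : Matrix (Fin p) (Fin p) ℝ))
            * (Chat * Ct * Chatᵀ + ε • (1 : Matrix (Fin p) (Fin p) ℝ))⁻¹) := by
          rw [← Matrix.mul_assoc, hRH]
      _ = R := by rw [Matrix.mul_nonsing_inv _ hHdet, Matrix.mul_one]
      _ = Ψt * (Aᵀ * K * A + ((m : ℝ) * ε) • (1 : Matrix (Fin m) (Fin m) ℝ))⁻¹ * Aᵀ * Φᵀ := by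
          rw [hR, ← hc, hGeq]
end

section
/- With posterior mean m = CΦAΣ⁻¹z̃ where C = [ΦAΣ⁻¹AᵀΦᵀ + γ⁻²I]⁻¹, if Σ = σ²I then m = [ΦAAᵀΦᵀ + (σ²/γ²)I]⁻¹ΦAz̃, which equals the parametric DME estimator weights with ε = σ²/(mγ²). -/
open Matrix

lemma posdef_aux {p n : ℕ} (B : Matrix (Fin p) (Fin n) ℝ) {c : ℝ} (hc : 0 < c) :
    (B * Bᵀ + c • (1 : Matrix (Fin p) (Fin p) ℝ)).PosDef := by
  have h1 : (B * Bᵀ : Matrix (Fin p) (Fin p) ℝ).PosSemidef := by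
    simpa using Matrix.posSemidef_self_mul_conjTranspose B
  have h2 : (c • (1 : Matrix (Fin p) (Fin p) ℝ)).PosDef := by
    rw [Matrix.smul_one_eq_diagonal]
    exact Matrix.posDef_diagonal_iff.2 fun _ => hc
  exact Matrix.PosDef.posSemidef_add h1 h2

/-- With `Σ = σ²I`, the TTBLR posterior mean `m = CΦAΣ⁻¹z̃` equals
`[ΦAAᵀΦᵀ + (σ²/γ²)I]⁻¹ΦAz̃`, i.e. the parametric DME estimator weights with
`ε = σ²/(mγ²)`. -/
theorem ttblr_map_is_dme {p n m : ℕ} (hm : 0 < m)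
    (Φ : Matrix (Fin p) (Fin n) ℝ) (A : Matrix (Fin n) (Fin m) ℝ)
    (zt : Fin m → ℝ) (γ σ : ℝ) (hγ : 0 < γ) (hσ : 0 < σ) :
    let Sg : Matrix (Fin m) (Fin m) ℝ := (σ ^ 2) • 1
    let C : Matrix (Fin p) (Fin p) ℝ :=
      (Φ * A * Sg⁻¹ * Aᵀ * Φᵀ + (γ ^ 2)⁻¹ • (1 : Matrix (Fin p) (Fin p) ℝ))⁻¹
    let post_mean : Fin p → ℝ := (C * (Φ * A) * Sg⁻¹).mulVec zt
    let ε : ℝ := σ ^ 2 / ((m : ℝ) * γ ^ 2)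
    post_mean
        = ((Φ * A * Aᵀ * Φᵀ + (σ ^ 2 / γ ^ 2) • (1 : Matrix (Fin p) (Fin p) ℝ))⁻¹ *
            (Φ * A)).mulVec zt ∧
      post_mean
        = ((Φ * A * Aᵀ * Φᵀ + ((m : ℝ) * ε) • (1 : Matrix (Fin p) (Fin p) ℝ))⁻¹ *
            (Φ * A)).mulVec zt := by
  intro Sg C post_mean ε
  have hσ2 : (σ ^ 2 : ℝ) ≠ 0 := by positivity
  have hγ2 : (γ ^ 2 : ℝ) ≠ 0 := by positivity
  have hc : (0 : ℝ) < σ ^ 2 / γ ^ 2 := by positivity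
  set M : Matrix (Fin p) (Fin p) ℝ :=
    Φ * A * Aᵀ * Φᵀ + (σ ^ 2 / γ ^ 2) • (1 : Matrix (Fin p) (Fin p) ℝ) with hM
  have hMpd : M.PosDef := by
    have := posdef_aux (Φ * A) hc
    rw [Matrix.transpose_mul] at this
    simpa [hM, Matrix.mul_assoc] using this
  have hMdet : IsUnit M.det := hMpd.isUnit.map (Matrix.detMonoidHom)
  have hSginv : Sg⁻¹ = (σ ^ 2)⁻¹ • (1 : Matrix (Fin m) (Fin m) ℝ) := by
    refine Matrix.inv_eq_left_inv ?_
    rw [Matrix.smul_mul, Matrix.one_mul, smul_smul, inv_mul_cancel₀ hσ2, one_smul]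
  have hCinner : Φ * A * Sg⁻¹ * Aᵀ * Φᵀ + (γ ^ 2)⁻¹ • (1 : Matrix (Fin p) (Fin p) ℝ)
      = (σ ^ 2)⁻¹ • M := by
    rw [hSginv, hM, smul_add, smul_smul]
    congr 1
    · rw [Matrix.mul_smul, Matrix.mul_one, Matrix.smul_mul, Matrix.smul_mul]
    · rw [div_eq_mul_inv, ← mul_assoc, inv_mul_cancel₀ hσ2, one_mul]
  have hC : C = (σ ^ 2) • M⁻¹ := by
    rw [show C = (Φ * A * Sg⁻¹ * Aᵀ * Φᵀ + (γ ^ 2)⁻¹ • (1 : Matrix (Fin p) (Fin p) ℝ))⁻¹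
      from rfl, hCinner]
    refine Matrix.inv_eq_left_inv ?_
    rw [Matrix.smul_mul, Matrix.mul_smul, smul_smul, mul_inv_cancel₀ hσ2, one_smul,
      Matrix.nonsing_inv_mul _ hMdet]
  have hkey : C * (Φ * A) * Sg⁻¹ = M⁻¹ * (Φ * A) := by
    rw [hC, hSginv, Matrix.mul_smul, Matrix.mul_one, Matrix.smul_mul, smul_smul,
      inv_mul_cancel₀ hσ2, one_smul]
  have hεeq : (m : ℝ) * ε = σ ^ 2 / γ ^ 2 := by
    have hm' : (m : ℝ) ≠ 0 := Nat.cast_ne_zero.2 hm.ne'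
    field_simp [ε]
    show (m:ℝ) * (σ ^ 2 / ((m : ℝ) * γ ^ 2)) * γ ^ 2 = σ ^ 2
    rw [mul_div_assoc', div_mul_eq_mul_div, div_eq_iff (mul_ne_zero hm' hγ2)]
    ring
  constructor
  · show (C * (Φ * A) * Sg⁻¹).mulVec zt = (M⁻¹ * (Φ * A)).mulVec zt
    rw [hkey]
  · show (C * (Φ * A) * Sg⁻¹).mulVec zt = _
    rw [hkey, hεeq]
end

section
/- If C_{X|Y}C_{Y|X}C_{XX} = C_{XX}, where C_{Y|X}C_{XX} = C_{YX} = C_{YY}(C_{X|Y})ᵀ are factorizations of the joint operator, then C_{X|Y}C_{YY}(C_{X|Y})ᵀ = C_{XX}, and consequently the deconditional mean operator (C_{X|Y}C_{YY})ᵀ(C_{X|Y}C_{YY}(C_{X|Y})ᵀ)⁻¹ equals the conditional mean operator C_{Y|X} = C_{YX}C_{XX}⁻¹. -/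
open Matrix

/-- Nonparametric Bayes' rule: if `C_{X|Y}C_{Y|X}C_{XX} = C_{XX}` and the joint
operator factorizes as `C_{Y|X}C_{XX} = C_{YX} = C_{YY}C_{X|Y}ᵀ`, then
`C_{X|Y}C_{YY}C_{X|Y}ᵀ = C_{XX}` and the DMO equals `C_{Y|X} = C_{YX}C_{XX}⁻¹`. -/
theorem dmo_is_bayes_rule {p q : ℕ}
    (CXgY : Matrix (Fin p) (Fin q) ℝ) (CYgX : Matrix (Fin q) (Fin p) ℝ)
    (CYY : Matrix (Fin q) (Fin q) ℝ) (CXX : Matrix (Fin p) (Fin p) ℝ)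
    (hYYsymm : CYYᵀ = CYY) (hXXsymm : CXXᵀ = CXX)
    (hXXinv : IsUnit CXX)
    (hjoint : CYgX * CXX = CYY * CXgYᵀ)
    (hcancel : CXgY * CYgX * CXX = CXX) :
    CXgY * CYY * CXgYᵀ = CXX ∧
      (CXgY * CYY)ᵀ * (CXgY * CYY * CXgYᵀ)⁻¹ = CYgX := by
  have h1 : CXgY * CYY * CXgYᵀ = CXX := by
    calc CXgY * CYY * CXgYᵀ = CXgY * (CYY * CXgYᵀ) := by rw [Matrix.mul_assoc]
    _ = CXgY * (CYgX * CXX) := by rw [hjoint]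
    _ = CXgY * CYgX * CXX := by rw [Matrix.mul_assoc]
    _ = CXX := hcancel
  refine ⟨h1, ?_⟩
  rw [h1, Matrix.transpose_mul, hYYsymm]
  calc CYY * CXgYᵀᵀᵀ * CXX⁻¹ = CYgX * CXX * CXX⁻¹ := by rw [Matrix.transpose_transpose, ← hjoint]
  _ = CYgX := by
    rw [Matrix.mul_assoc, Matrix.mul_nonsing_inv _ ((Matrix.isUnit_iff_isUnit_det _).mp hXXinv), Matrix.mul_one]
end

section
/- For A ∈ ℝ^{n×m}, K ∈ ℝ^{n×n} symmetric positive semidefinite, and σ > 0, the matrix σ²[I − Aᵀ(KAAᵀ + σ²I)⁻¹KA]⁻¹ is well-defined (the bracketed matrix is invertible) and equals AᵀKA + σ²I. -/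
open Matrix

lemma smul_one_posDef {k : ℕ} {c : ℝ} (hc : 0 < c) :
    (c • (1 : Matrix (Fin k) (Fin k) ℝ)).PosDef := by
  rw [Matrix.smul_one_eq_diagonal]
  exact Matrix.posDef_diagonal_iff.mpr fun _ => hc

/-- Alternative form of the TTBKR marginal likelihood covariance:
`σ²[I − Aᵀ(KAAᵀ + σ²I)⁻¹KA]⁻¹` is well-defined and equals `AᵀKA + σ²I`. -/
theorem ttbkr_alternative_covariance {n m : ℕ}
    (A : Matrix (Fin n) (Fin m) ℝ) (K : Matrix (Fin n) (Fin n) ℝ)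
    (hK : K.PosSemidef) (hKsymm : Kᵀ = K) (σ : ℝ) (hσ : 0 < σ) :
    let M : Matrix (Fin m) (Fin m) ℝ :=
      1 - Aᵀ * (K * A * Aᵀ + (σ ^ 2) • (1 : Matrix (Fin n) (Fin n) ℝ))⁻¹ * K * A
    IsUnit M ∧ (σ ^ 2) • M⁻¹ = Aᵀ * K * A + (σ ^ 2) • (1 : Matrix (Fin m) (Fin m) ℝ) := by
  intro M
  have hσ2 : (0:ℝ) < σ ^ 2 := by positivity
  set P : Matrix (Fin m) (Fin m) ℝ := Aᵀ * K * A with hPdef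
  set S : Matrix (Fin m) (Fin m) ℝ :=
    P + (σ ^ 2) • (1 : Matrix (Fin m) (Fin m) ℝ) with hSdef
  -- S is positive definite hence invertible
  have hP : P.PosSemidef := by
    have := hK.conjTranspose_mul_mul_same A
    simpa [Matrix.conjTranspose_eq_transpose_of_trivial, Matrix.mul_assoc, hPdef] using this
  have hS : S.PosDef := Matrix.PosDef.posSemidef_add hP (smul_one_posDef hσ2)
  have hSd : IsUnit S.det := (isUnit_iff_isUnit_det _).mp hS.isUnit
  have hSinv : S * S⁻¹ = 1 := mul_nonsing_inv _ hSd
  have hSinv' : S⁻¹ * S = 1 := nonsing_inv_mul _ hSd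
  set B : Matrix (Fin n) (Fin n) ℝ :=
    K * A * Aᵀ + (σ ^ 2) • (1 : Matrix (Fin n) (Fin n) ℝ) with hBdef
  set C : Matrix (Fin n) (Fin n) ℝ :=
    (σ ^ 2)⁻¹ • (1 - K * A * S⁻¹ * Aᵀ) with hCdef
  -- push-through identity
  have key : K * A * Aᵀ * (K * A * S⁻¹ * Aᵀ) + (σ ^ 2) • (K * A * S⁻¹ * Aᵀ)
      = K * A * Aᵀ := by
    have h1 : K * A * Aᵀ * (K * A * S⁻¹ * Aᵀ) + (σ ^ 2) • (K * A * S⁻¹ * Aᵀ)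
        = K * A * (S * S⁻¹) * Aᵀ := by
      rw [hSdef]
      simp only [hPdef, Matrix.add_mul, Matrix.mul_add, Matrix.smul_mul,
        Matrix.mul_smul, Matrix.one_mul, Matrix.mul_one, Matrix.mul_assoc]
    rw [h1, hSinv, Matrix.mul_one]
  have expand : B * (1 - K * A * S⁻¹ * Aᵀ)
      = (σ ^ 2) • (1 : Matrix (Fin n) (Fin n) ℝ) := by
    have h2 : B * (1 - K * A * S⁻¹ * Aᵀ)
        = B - (K * A * Aᵀ * (K * A * S⁻¹ * Aᵀ) + (σ ^ 2) • (K * A * S⁻¹ * Aᵀ)) := by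
      rw [Matrix.mul_sub, Matrix.mul_one, hBdef, Matrix.add_mul, Matrix.smul_mul,
        Matrix.one_mul]
    rw [h2, key, hBdef]
    abel
  have hBC : B * C = 1 := by
    rw [hCdef, Matrix.mul_smul, expand, smul_smul, inv_mul_cancel₀ (ne_of_gt hσ2),
      one_smul]
  have hBinv : B⁻¹ = C := Matrix.inv_eq_right_inv hBC
  -- Now compute M
  have hM1 : M = 1 - (σ ^ 2)⁻¹ • (P - P * S⁻¹ * P) := by
    show 1 - Aᵀ * B⁻¹ * K * A = _
    rw [hBinv, hCdef, Matrix.mul_smul, Matrix.smul_mul, Matrix.smul_mul]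
    congr 1
    rw [Matrix.mul_sub, Matrix.mul_one, Matrix.sub_mul, Matrix.sub_mul]
    simp only [hPdef, Matrix.mul_assoc]
  have hstep : P - P * S⁻¹ * P = (σ ^ 2) • (P * S⁻¹) := by
    have e : S - P = (σ ^ 2) • (1 : Matrix (Fin m) (Fin m) ℝ) := by
      rw [hSdef]; abel
    calc P - P * S⁻¹ * P = P * S⁻¹ * S - P * S⁻¹ * P := by
          rw [Matrix.mul_assoc P S⁻¹ S, hSinv', Matrix.mul_one]
      _ = P * S⁻¹ * (S - P) := by rw [Matrix.mul_sub]
      _ = (σ ^ 2) • (P * S⁻¹) := by rw [e, Matrix.mul_smul, Matrix.mul_one]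
  have hM2 : M = (σ ^ 2) • S⁻¹ := by
    rw [hM1, hstep, smul_smul, inv_mul_cancel₀ (ne_of_gt hσ2), one_smul]
    have h := hSinv
    rw [hSdef, Matrix.add_mul, Matrix.smul_mul, Matrix.one_mul] at h
    rw [← h]; abel
  have hMC : M * ((σ ^ 2)⁻¹ • S) = 1 := by
    rw [hM2, Matrix.smul_mul, Matrix.mul_smul, smul_smul,
      mul_inv_cancel₀ (ne_of_gt hσ2), one_smul, hSinv']
  have hMd : IsUnit M := by
    have hd : M.det * ((σ ^ 2)⁻¹ • S).det = 1 := by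
      rw [← Matrix.det_mul, hMC, Matrix.det_one]
    exact (isUnit_iff_isUnit_det M).mpr (IsUnit.of_mul_eq_one _ hd)
  refine ⟨hMd, ?_⟩
  rw [Matrix.inv_eq_right_inv hMC, smul_smul, mul_inv_cancel₀ (ne_of_gt hσ2), one_smul,
    hSdef, hPdef]
end

section
/- Let C_{X|Y}: H_ℓ → H_k be a bounded linear operator between Hilbert spaces such that (C_{X|Y})ᵀC_{X|Y} is invertible, and let C_{YY}: H_ℓ → H_ℓ be symmetric positive with image conditions ensuring all stated inverses exist. Then (C_{X|Y}C_{YY})ᵀ(C_{X|Y}C_{YY}(C_{X|Y})ᵀ)⁻¹ = ((C_{X|Y})ᵀC_{X|Y})⁻¹(C_{X|Y})ᵀ, i.e., the deconditional mean operator is the Moore–Penrose pseudo-inverse of the conditional mean operator. -/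
open Matrix

/-- The deconditional mean operator is the Moore–Penrose pseudo-inverse of the
conditional mean operator: `(C C_YY)ᵀ (C C_YY Cᵀ)⁻¹ = (CᵀC)⁻¹ Cᵀ`. -/
theorem dmo_is_pseudoinverse {p q : ℕ}
    (C : Matrix (Fin p) (Fin q) ℝ) (hC : IsUnit (Cᵀ * C))
    (CYY : Matrix (Fin q) (Fin q) ℝ) (hCYY : CYY.PosDef)
    (hE : IsUnit (C * CYY * Cᵀ)) :
    (C * CYY)ᵀ * (C * CYY * Cᵀ)⁻¹ = (Cᵀ * C)⁻¹ * Cᵀ := by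
  have hCd : IsUnit (Cᵀ * C).det := (Matrix.isUnit_iff_isUnit_det _).mp hC
  have hEd : IsUnit (C * CYY * Cᵀ).det := (Matrix.isUnit_iff_isUnit_det _).mp hE
  have hsym : CYYᵀ = CYY := by
    have := hCYY.isHermitian.eq
    simpa using this
  calc (C * CYY)ᵀ * (C * CYY * Cᵀ)⁻¹
      = CYY * Cᵀ * (C * CYY * Cᵀ)⁻¹ := by rw [transpose_mul, hsym]
    _ = (Cᵀ * C)⁻¹ * (Cᵀ * C) * (CYY * Cᵀ) * (C * CYY * Cᵀ)⁻¹ := by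
        rw [Matrix.nonsing_inv_mul _ hCd, Matrix.one_mul]
    _ = (Cᵀ * C)⁻¹ * Cᵀ * (C * CYY * Cᵀ) * (C * CYY * Cᵀ)⁻¹ := by
        simp only [Matrix.mul_assoc]
    _ = (Cᵀ * C)⁻¹ * Cᵀ := by
        rw [Matrix.mul_assoc, Matrix.mul_nonsing_inv _ hEd, Matrix.mul_one]
end
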